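/- Let C be a symmetric positive definite fourth-order-like linear operator on S^d of the form C P = λ tr(P) I + 2μ P with μ > 0, let k_1 > 0, σ_c > 0, and R ∈ S^d with deviatoric part R^D. Then P* = (max{‖R^D‖ − σ_c, 0}/(2μ + k_1)) · R^D/‖R^D‖ (interpreted as 0 when R^D = 0) is the unique minimizer over trace-free symmetric d×d matrices P of the functional L(P) = ½ (C P + k_1 P) : P − P : R + σ_c ‖P‖. -/

import Mathlib

open Matrix

/-- Frobenius norm of a real square matrix. -/
noncomputable def frobNorm {d : ℕ} (a : Matrix (Fin d) (Fin d) ℝ) : ℝ :=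
  Real.sqrt ((aᵀ * a).trace)

/-- Deviatoric part of a square matrix. -/
noncomputable def deviator {d : ℕ} (a : Matrix (Fin d) (Fin d) ℝ) :
    Matrix (Fin d) (Fin d) ℝ :=
  a - (a.trace / d) • (1 : Matrix (Fin d) (Fin d) ℝ)

/-- Embedding of matrices into Euclidean space (auxiliary). -/
noncomputable def toE {d : ℕ} (P : Matrix (Fin d) (Fin d) ℝ) :
    EuclideanSpace ℝ (Fin d × Fin d) :=
  (WithLp.equiv 2 _).symm (fun p => P p.1 p.2)

lemma toE_inj {d : ℕ} : Function.Injective (toE (d := d)) := by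
  intro P Q h
  ext i j
  have := congrFun (congrArg (WithLp.equiv 2 _) h) (i, j)
  simpa [toE] using this

lemma toE_smul {d : ℕ} (c : ℝ) (P : Matrix (Fin d) (Fin d) ℝ) :
    toE (c • P) = c • toE P := rfl

lemma inner_toE {d : ℕ} (P Q : Matrix (Fin d) (Fin d) ℝ) :
    (inner ℝ (toE P) (toE Q) : ℝ) = (Pᵀ * Q).trace := by
  simp only [toE, PiLp.inner_apply, RCLike.inner_apply, conj_trivial,
    Matrix.trace, Matrix.diag, Matrix.mul_apply, Matrix.transpose_apply,
    Fintype.sum_prod_type, WithLp.equiv_symm_apply, PiLp.toLp_apply]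
  rw [Finset.sum_comm]
  exact Finset.sum_congr rfl fun _ _ => Finset.sum_congr rfl fun _ _ => mul_comm _ _

lemma norm_toE {d : ℕ} (P : Matrix (Fin d) (Fin d) ℝ) : ‖toE P‖ = frobNorm P := by
  rw [EuclideanSpace.norm_eq, frobNorm]
  congr 1
  simp only [toE, WithLp.equiv_symm_apply, PiLp.toLp_apply, Real.norm_eq_abs, sq_abs,
    Matrix.trace, Matrix.diag, Matrix.mul_apply, Matrix.transpose_apply,
    Fintype.sum_prod_type]
  rw [Finset.sum_comm]
  simp [sq]

lemma gmin_le (a σ s t : ℝ) (ha : 0 < a) (hσ : 0 < σ) (hs : 0 ≤ s) (ht : 0 ≤ t) :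
    a / 2 * (max (s - σ) 0 / a) ^ 2 - (max (s - σ) 0 / a) * s + σ * (max (s - σ) 0 / a)
      ≤ a / 2 * t ^ 2 - t * s + σ * t := by
  rcases max_cases (s - σ) 0 with ⟨h1, h2⟩ | ⟨h1, h2⟩ <;> rw [h1]
  · set u := (s - σ) / a with hu
    have h3 : u * a = s - σ := div_mul_cancel₀ _ ha.ne'
    have h5 : (t - u) * (s - σ) = (t - u) * (u * a) := by rw [h3]
    nlinarith [mul_nonneg ha.le (sq_nonneg (t - u)), h5]
  · simp only [zero_div]
    nlinarith

lemma gmin_eq (a σ s t : ℝ) (ha : 0 < a) (hσ : 0 < σ) (hs : 0 ≤ s) (ht : 0 ≤ t)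
    (heq : a / 2 * t ^ 2 - t * s + σ * t
      = a / 2 * (max (s - σ) 0 / a) ^ 2 - (max (s - σ) 0 / a) * s + σ * (max (s - σ) 0 / a)) :
    t = max (s - σ) 0 / a := by
  rcases max_cases (s - σ) 0 with ⟨h1, h2⟩ | ⟨h1, h2⟩ <;> rw [h1] at heq ⊢
  · set u := (s - σ) / a with hu
    have h3 : u * a = s - σ := div_mul_cancel₀ _ ha.ne'
    have h5 : (t - u) * (s - σ) = (t - u) * (u * a) := by rw [h3]
    have h4 : (t - u) ^ 2 = 0 := by nlinarith [mul_nonneg ha.le (sq_nonneg (t - u)), h5]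
    have := pow_eq_zero_iff (n := 2) (by norm_num) |>.mp h4
    linarith [sub_eq_zero.mp this]
  · simp only [zero_div] at heq ⊢
    nlinarith [sq_nonneg t]

/-- For the St. Venant–Kirchhoff operator `C P = λ tr(P) I + 2μ P` with
`μ > 0`, `k₁ > 0`, `σ_c > 0`, and `R ∈ S^d` with deviator `R^D`, the matrix
`P* = (max{‖R^D‖ − σ_c, 0}/(2μ + k₁)) R^D/‖R^D‖` (zero if `R^D = 0`) is the unique
minimizer over trace-free symmetric matrices of
`L(P) = ½ (C P + k₁ P) : P − P : R + σ_c ‖P‖`. -/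
theorem vonMises_local_minimizer {d : ℕ} (hd : 0 < d)
    (lam μ k1 σc : ℝ) (hlam : 0 < lam) (hμ : 0 < μ) (hk1 : 0 < k1) (hσc : 0 < σc)
    (R : Matrix (Fin d) (Fin d) ℝ) (hR : R.IsSymm) :
    let Cop : Matrix (Fin d) (Fin d) ℝ → Matrix (Fin d) (Fin d) ℝ :=
      fun P => (lam * P.trace) • (1 : Matrix (Fin d) (Fin d) ℝ) + (2 * μ) • P
    let L : Matrix (Fin d) (Fin d) ℝ → ℝ :=
      fun P => (1 / 2) * ((Cop P + k1 • P)ᵀ * P).trace - (Pᵀ * R).trace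
        + σc * frobNorm P
    let Pstar : Matrix (Fin d) (Fin d) ℝ :=
      (max (frobNorm (deviator R) - σc) 0 / (2 * μ + k1) / frobNorm (deviator R)) •
        deviator R
    Pstar.IsSymm ∧ Pstar.trace = 0 ∧
    (∀ P : Matrix (Fin d) (Fin d) ℝ, P.IsSymm → P.trace = 0 →
        L Pstar ≤ L P ∧ (P ≠ Pstar → L Pstar < L P)) := by
  intro Cop L Pstar
  have ha : (0:ℝ) < 2 * μ + k1 := by linarith
  have hd' : (d:ℝ) ≠ 0 := Nat.cast_ne_zero.mpr hd.ne'
  set RD := deviator R with hRDdef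
  set s := frobNorm RD with hsdef
  set ts := max (s - σc) 0 / (2 * μ + k1) with htsdef
  have hPstar : Pstar = (ts / s) • RD := rfl
  have hs0 : 0 ≤ s := by rw [hsdef, frobNorm]; exact Real.sqrt_nonneg _
  have hsn : ‖toE RD‖ = s := by rw [hsdef]; exact norm_toE RD
  have hts0 : 0 ≤ ts := div_nonneg (le_max_right _ _) ha.le
  have hRDsymm : RDᵀ = RD := by
    rw [hRDdef]; unfold deviator
    rw [Matrix.transpose_sub, Matrix.transpose_smul, Matrix.transpose_one, hR.eq]
  have hRDtr : RD.trace = 0 := by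
    rw [hRDdef]; unfold deviator
    rw [Matrix.trace_sub, Matrix.trace_smul, Matrix.trace_one, Fintype.card_fin, smul_eq_mul]
    field_simp
    simp
  have hPstarTr : Pstar.trace = 0 := by rw [hPstar, Matrix.trace_smul, hRDtr, smul_zero]
  -- relation c * s = ts
  have hts_s : ts / s * s = ts := by
    by_cases hs : s = 0
    · have h0 : ts = 0 := by
        rw [htsdef, hs, max_eq_right (by linarith), zero_div]
      rw [h0, hs, zero_div, zero_mul]
    · field_simp
  have htoEPstar : toE Pstar = (ts / s) • toE RD := by rw [hPstar, toE_smul]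
  have hnormPstar : ‖toE Pstar‖ = ts := by
    rw [htoEPstar, norm_smul, Real.norm_eq_abs, abs_of_nonneg (div_nonneg hts0 hs0),
      hsn, hts_s]
  have hinnerPstar : (inner ℝ (toE Pstar) (toE RD) : ℝ) = ts * s := by
    rw [htoEPstar, real_inner_smul_left, real_inner_self_eq_norm_sq, hsn, sq,
      ← mul_assoc, hts_s]
  -- value of L on trace-free matrices
  have hL : ∀ P : Matrix (Fin d) (Fin d) ℝ, P.trace = 0 →
      L P = (2 * μ + k1) / 2 * ‖toE P‖ ^ 2 - (inner ℝ (toE P) (toE RD) : ℝ)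
        + σc * ‖toE P‖ := by
    intro P hPtr
    have e1 : Cop P + k1 • P = (2 * μ + k1) • P := by
      unfold Cop
      beta_reduce
      rw [hPtr, mul_zero, zero_smul, zero_add, ← add_smul]
    have hRsum : R = RD + (R.trace / (d:ℝ)) • (1 : Matrix (Fin d) (Fin d) ℝ) := by
      rw [hRDdef]; unfold deviator; abel
    have e2 : (Pᵀ * R).trace = (inner ℝ (toE P) (toE RD) : ℝ) := by
      rw [inner_toE, hRsum, Matrix.mul_add, Matrix.trace_add, Matrix.mul_smul,
        Matrix.trace_smul, Matrix.mul_one, Matrix.trace_transpose, hPtr, smul_zero,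
        add_zero]
    have e3 : ((Cop P + k1 • P)ᵀ * P).trace = (2 * μ + k1) * ‖toE P‖ ^ 2 := by
      rw [e1, Matrix.transpose_smul, Matrix.smul_mul, Matrix.trace_smul, smul_eq_mul,
        ← inner_toE, real_inner_self_eq_norm_sq]
    unfold L
    beta_reduce
    rw [e3, e2, ← norm_toE]
    ring
  have hLPstar : L Pstar = (2 * μ + k1) / 2 * ts ^ 2 - ts * s + σc * ts := by
    rw [hL Pstar hPstarTr, hnormPstar, hinnerPstar]
  refine ⟨?_, hPstarTr, ?_⟩
  · show Pstarᵀ = Pstar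
    rw [hPstar, Matrix.transpose_smul, hRDsymm]
  intro P hPsym hPtr
  have hgmin := gmin_le (2 * μ + k1) σc s ‖toE P‖ ha hσc hs0 (norm_nonneg _)
  rw [← htsdef] at hgmin
  have hip : (inner ℝ (toE P) (toE RD) : ℝ) ≤ ‖toE P‖ * s := by
    rw [← hsn]; exact real_inner_le_norm _ _
  have hLP := hL P hPtr
  have hle : L Pstar ≤ L P := by rw [hLPstar, hLP]; linarith
  refine ⟨hle, fun hne => lt_of_le_of_ne hle fun heq => hne ?_⟩
  -- from equality derive P = Pstar
  have hD : (2 * μ + k1) / 2 * ‖toE P‖ ^ 2 - ‖toE P‖ * s + σc * ‖toE P‖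
      = (2 * μ + k1) / 2 * ts ^ 2 - ts * s + σc * ts := by
    rw [hLPstar, hLP] at heq; linarith
  rw [htsdef] at hD
  have hteq : ‖toE P‖ = ts := by
    rw [htsdef]
    exact gmin_eq (2 * μ + k1) σc s ‖toE P‖ ha hσc hs0 (norm_nonneg _) hD
  by_cases hts : ts = 0
  · have hP0 : P = 0 := by
      apply toE_inj
      have : ‖toE P‖ = 0 := by rw [hteq, hts]
      rw [norm_eq_zero.mp this]; rfl
    have hPs0 : Pstar = 0 := by rw [hPstar, hts, zero_div, zero_smul]
    rw [hP0, hPs0]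
  · have htspos : 0 < ts := lt_of_le_of_ne hts0 (Ne.symm hts)
    have hspos : 0 < s := by
      have hsgt : σc < s := by
        by_contra hcon
        push_neg at hcon
        exact hts (by rw [htsdef, max_eq_right (by linarith), zero_div])
      linarith
    rw [hLPstar, hLP, hteq] at heq
    have hipv : (inner ℝ (toE P) (toE RD) : ℝ) = ts * s := by linarith
    have hipeq : (inner ℝ (toE P) (toE RD) : ℝ) = ‖toE P‖ * ‖toE RD‖ := by
      rw [hipv, hsn, hteq]
    have hkey := inner_eq_norm_mul_iff_real.mp hipeq
    rw [hsn, hteq] at hkey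
    -- hkey : s • toE P = ts • toE RD
    apply toE_inj
    rw [hPstar, toE_smul]
    calc toE P = (s⁻¹ * s) • toE P := by rw [inv_mul_cancel₀ hspos.ne', one_smul]
      _ = s⁻¹ • (s • toE P) := by rw [mul_smul]
      _ = s⁻¹ • (ts • toE RD) := by rw [hkey]
      _ = (ts / s) • toE RD := by rw [smul_smul, mul_comm, div_eq_mul_inv]
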